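/- arXiv:1303.0409 — 4 statements merged into one kernel-verified Lean document; each statement's English description precedes it below -/
import Mathlib

section
/- The Cayley transform C(q',p') = ((1+p')⁻¹·q', (1+p')⁻¹·(1−p')), defined for (q',p') on the unit sphere S = {|q'|²+|p'|² = 1} ⊂ ℍⁿ×ℍ with p' ≠ −1, maps into the Siegel boundary {(q,p) : Re(p) = |q|²}, and the map (q,p) ↦ (2(1+p)⁻¹·q, (1+p)⁻¹·(1−p)) is its two-sided inverse. -/
open Quaternion

lemma norm_sq_eq_normSq' (a : ℍ[ℝ]) : ‖a‖ ^ 2 = normSq a := by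
  rw [sq, ← Quaternion.normSq_eq_norm_mul_self]

lemma two_eq_coe : ((2:ℝ):ℍ[ℝ]) = 2 := by norm_cast

lemma htwo : (2:ℍ[ℝ]) ≠ 0 := by
  intro h0
  rw [← two_eq_coe, show (0:ℍ[ℝ]) = ((0:ℝ):ℍ[ℝ]) from rfl, Quaternion.coe_inj] at h0
  norm_num at h0

lemma c2 (x : ℍ[ℝ]) : Commute (2:ℍ[ℝ]) x := by
  rw [← two_eq_coe]; exact Quaternion.coe_commute 2 x

lemma ns2 : normSq (2:ℍ[ℝ]) = 4 := by
  rw [← two_eq_coe, Quaternion.normSq_coe]; norm_num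

lemma aux_key (p : ℍ[ℝ]) (h : (1 : ℍ[ℝ]) + p ≠ 0) :
    (1 : ℍ[ℝ]) + (1 + p)⁻¹ * (1 - p) = (1 + p)⁻¹ * 2 := by
  rw [show (2:ℍ[ℝ]) = (1 + p) + (1 - p) from by noncomm_ring; rw [two_smul]; exact one_add_one_eq_two.symm, mul_add,
    inv_mul_cancel₀ h]

lemma aux_inv (p : ℍ[ℝ]) (h : (1 : ℍ[ℝ]) + p ≠ 0) :
    ((1 : ℍ[ℝ]) + (1 + p)⁻¹ * (1 - p))⁻¹ = 2⁻¹ * (1 + p) := by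
  rw [aux_key p h, mul_inv_rev, inv_inv]

lemma aux_id1 (p q : ℍ[ℝ]) (h : (1 : ℍ[ℝ]) + p ≠ 0) :
    2 * (((1 : ℍ[ℝ]) + (1 + p)⁻¹ * (1 - p))⁻¹ * ((1 + p)⁻¹ * q)) = q := by
  rw [aux_inv p h, mul_assoc, mul_inv_cancel_left₀ h q, mul_inv_cancel_left₀ htwo q]

lemma aux_id2 (p : ℍ[ℝ]) (h : (1 : ℍ[ℝ]) + p ≠ 0) :
    ((1 : ℍ[ℝ]) + (1 + p)⁻¹ * (1 - p))⁻¹ * (1 - (1 + p)⁻¹ * (1 - p)) = p := by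
  have h2 : (1 : ℍ[ℝ]) - (1 + p)⁻¹ * (1 - p) = (1 + p)⁻¹ * (2 * p) := by
    conv_rhs => rw [show (2:ℍ[ℝ]) * p = (1 + p) - (1 - p) from by noncomm_ring,
      mul_sub, inv_mul_cancel₀ h]
  rw [aux_inv p h, h2, mul_assoc, mul_inv_cancel_left₀ h,
    inv_mul_cancel_left₀ htwo p]

lemma aux_re (p : ℍ[ℝ]) :
    ((1 + p)⁻¹ * (1 - p)).re = (normSq (1 + p))⁻¹ * (1 - normSq p) := by
  rw [Quaternion.inv_def, smul_mul_assoc, Quaternion.re_smul, smul_eq_mul]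
  congr 1
  simp [Quaternion.re_mul, Quaternion.normSq_def']
  ring

lemma aux_norm_inv_mul (a b : ℍ[ℝ]) :
    ‖a⁻¹ * b‖ ^ 2 = (normSq a)⁻¹ * normSq b := by
  rw [norm_mul, mul_pow, norm_inv, inv_pow, norm_sq_eq_normSq', norm_sq_eq_normSq']

/-- The Cayley transform `C(q',p') = ((1+p')⁻¹q', (1+p')⁻¹(1−p'))` maps the unit sphere
minus the point `p' = −1` into the Siegel boundary `{Re p = |q|²}`, and the map
`(q,p) ↦ (2(1+p)⁻¹q, (1+p)⁻¹(1−p))` is its two-sided inverse. -/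
theorem cayley_transform (n : ℕ) :
    (∀ (q' : Fin n → ℍ[ℝ]) (p' : ℍ[ℝ]),
      (∑ i, ‖q' i‖ ^ 2) + ‖p'‖ ^ 2 = 1 → p' ≠ -1 →
      -- C maps into the Siegel boundary
      ((1 + p')⁻¹ * (1 - p')).re = ∑ i, ‖(1 + p')⁻¹ * q' i‖ ^ 2 ∧
      -- C⁻¹ ∘ C = id on the sphere minus the point
      (∀ i, 2 * ((1 + (1 + p')⁻¹ * (1 - p'))⁻¹ * ((1 + p')⁻¹ * q' i)) = q' i) ∧
      (1 + (1 + p')⁻¹ * (1 - p'))⁻¹ * (1 - (1 + p')⁻¹ * (1 - p')) = p') ∧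
    (∀ (q : Fin n → ℍ[ℝ]) (p : ℍ[ℝ]),
      p.re = ∑ i, ‖q i‖ ^ 2 →
      -- C⁻¹ maps the Siegel boundary to the sphere
      ((∑ i, ‖2 * ((1 + p)⁻¹ * q i)‖ ^ 2) + ‖(1 + p)⁻¹ * (1 - p)‖ ^ 2 = 1) ∧
      -- C ∘ C⁻¹ = id on the Siegel boundary
      (∀ i, (1 + (1 + p)⁻¹ * (1 - p))⁻¹ * (2 * ((1 + p)⁻¹ * q i)) = q i) ∧
      (1 + (1 + p)⁻¹ * (1 - p))⁻¹ * (1 - (1 + p)⁻¹ * (1 - p)) = p) := by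
  constructor
  · intro q' p' hsphere hne
    have h : (1 : ℍ[ℝ]) + p' ≠ 0 := by
      intro h0
      exact hne (eq_neg_of_add_eq_zero_right h0)
    refine ⟨?_, fun i => aux_id1 p' (q' i) h, aux_id2 p' h⟩
    have hsum : ∑ i, normSq (q' i) = 1 - normSq p' := by
      simp only [← norm_sq_eq_normSq']
      linarith
    calc ((1 + p')⁻¹ * (1 - p')).re = (normSq (1 + p'))⁻¹ * (1 - normSq p') := aux_re p'
      _ = ∑ i, ‖(1 + p')⁻¹ * q' i‖ ^ 2 := by
          simp only [aux_norm_inv_mul, ← Finset.mul_sum, hsum]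
  · intro q p hp
    have hre : ((1 : ℍ[ℝ]) + p).re > 0 := by
      have h0 : (0:ℝ) ≤ ∑ i, ‖q i‖ ^ 2 := Finset.sum_nonneg fun i _ => sq_nonneg _
      rw [← hp] at h0
      simp only [Quaternion.re_add, Quaternion.re_one]
      linarith
    have h : (1 : ℍ[ℝ]) + p ≠ 0 := by
      intro h0
      rw [h0] at hre
      simp at hre
    refine ⟨?_, fun i => ?_, aux_id2 p h⟩
    · have hns : normSq ((1:ℍ[ℝ]) + p) ≠ 0 := normSq_ne_zero.2 h
      have hsum : ∑ i, normSq (q i) = p.re := by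
        simp only [← norm_sq_eq_normSq']
        exact hp.symm
      have hterm : ∀ i, ‖2 * ((1 + p)⁻¹ * q i)‖ ^ 2
          = (4 * (normSq ((1:ℍ[ℝ]) + p))⁻¹) * normSq (q i) := by
        intro i
        rw [norm_mul, mul_pow, norm_sq_eq_normSq', ns2, aux_norm_inv_mul, ← mul_assoc]
      have hplus : normSq ((1:ℍ[ℝ]) + p) = 1 + 2 * p.re + normSq p := by
        simp [Quaternion.normSq_def']
        ring
      have hminus : normSq ((1:ℍ[ℝ]) - p) = 1 - 2 * p.re + normSq p := by
        simp [Quaternion.normSq_def']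
        ring
      have hns' : 1 + 2 * p.re + normSq p ≠ 0 := by rw [← hplus]; exact hns
      simp only [hterm, ← Finset.mul_sum, hsum, aux_norm_inv_mul, hplus, hminus]
      field_simp
      ring
    · rw [aux_inv p h,
        show (2:ℍ[ℝ]) * ((1 + p)⁻¹ * q i) = (1 + p)⁻¹ * (2 * q i) from by
          rw [← mul_assoc, (c2 ((1 + p)⁻¹)).eq, mul_assoc],
        mul_assoc, mul_inv_cancel_left₀ h, inv_mul_cancel_left₀ htwo]
end

section
/- The inversion σ on the Siegel model of the quaternionic Heisenberg group, given by σ(q,p) = (−p⁻¹·q, p⁻¹) for p ≠ 0, maps the Siegel boundary {Re(p)=|q|²} minus the origin to itself and is an involution: σ∘σ = id. -/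
open Quaternion

/-- The inversion `σ(q,p) = (−p⁻¹q, p⁻¹)` maps the Siegel boundary `{Re p = |q|²}`
minus the origin to itself and is an involution. -/
theorem siegel_inversion (n : ℕ) (q : Fin n → ℍ[ℝ]) (p : ℍ[ℝ])
    (hb : p.re = ∑ i, ‖q i‖ ^ 2) (h0 : (q, p) ≠ (0, 0)) :
    -- σ maps into the Siegel boundary minus the origin
    ((p⁻¹).re = ∑ i, ‖-p⁻¹ * q i‖ ^ 2) ∧
    (((fun i => -p⁻¹ * q i : Fin n → ℍ[ℝ]), p⁻¹) ≠ (0, 0)) ∧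
    -- σ ∘ σ = id
    (∀ i, -(p⁻¹)⁻¹ * (-p⁻¹ * q i) = q i) ∧ (p⁻¹)⁻¹ = p := by
  have hp : p ≠ 0 := by
    rintro rfl
    apply h0
    have : ∀ i, q i = 0 := by
      intro i
      have h1 : ∑ i, ‖q i‖ ^ 2 = 0 := hb.symm
      have := (Finset.sum_eq_zero_iff_of_nonneg (fun i _ => by positivity)).1 h1 i
        (Finset.mem_univ i)
      simpa [pow_eq_zero_iff] using this
    simp [Prod.ext_iff, funext_iff, this]
  refine ⟨?_, ?_, ?_, inv_inv p⟩
  · have hre : (p⁻¹).re = (normSq p)⁻¹ * p.re := by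
      rw [inv_def]; simp
    rw [hre, hb]
    rw [Finset.mul_sum]
    refine Finset.sum_congr rfl fun i _ => ?_
    rw [norm_mul, mul_pow, norm_neg]
    congr 1
    have : ‖p⁻¹‖ ^ 2 = normSq p⁻¹ := by
      rw [normSq_eq_norm_mul_self, sq]
    rw [this, normSq_inv]
  · intro h
    exact hp (by simpa [inv_eq_zero] using congrArg Prod.snd h)
  · intro i
    rw [inv_inv, ← mul_assoc, neg_mul_neg, mul_inv_cancel₀ hp, one_mul]
end

section
/- In the direct product model G(ℍ) = ℍⁿ × Im(ℍ), the inversion is given by σ(q,ω) = (−(|q|²−ω)⁻¹·q, −ω/(|q|⁴+|ω|²)), and it is an involution on G(ℍ) ∖ {(0,0)}. -/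
open Quaternion

/-- The inversion on the direct product model `G(ℍ) = ℍⁿ × Im(ℍ)`:
`σ(q,ω) = (−(|q|²−ω)⁻¹·q, −ω/(|q|⁴+|ω|²))`. -/
noncomputable def qcInv {n : ℕ} (x : (Fin n → ℍ[ℝ]) × ℍ[ℝ]) : (Fin n → ℍ[ℝ]) × ℍ[ℝ] :=
  (fun i => -((((∑ j, ‖x.1 j‖ ^ 2 : ℝ) : ℍ[ℝ]) - x.2)⁻¹ * x.1 i),
   -(((∑ j, ‖x.1 j‖ ^ 2) ^ 2 + ‖x.2‖ ^ 2 : ℝ)⁻¹ • x.2))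

lemma qc_normSq_sub (a : ℝ) (ω : ℍ[ℝ]) (him : ω.re = 0) :
    normSq ((a : ℍ[ℝ]) - ω) = a ^ 2 + ‖ω‖ ^ 2 := by
  have h : ‖ω‖ ^ 2 = normSq ω := by
    rw [Quaternion.normSq_eq_norm_mul_self, sq]
  rw [h, normSq_def', normSq_def']
  simp [him]
  ring

/-- The inversion `σ` preserves `G(ℍ) ∖ {(0,0)}` and is an involution there. -/
theorem qcInv_involution (n : ℕ) (x : (Fin n → ℍ[ℝ]) × ℍ[ℝ])
    (him : x.2.re = 0) (hx : x ≠ 0) :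
    (qcInv x).2.re = 0 ∧ qcInv x ≠ 0 ∧ qcInv (qcInv x) = x := by
  obtain ⟨q, ω⟩ := x
  simp only [Prod.mk.injEq] at *
  set a : ℝ := ∑ j, ‖q j‖ ^ 2 with ha
  set D : ℝ := a ^ 2 + ‖ω‖ ^ 2 with hD
  set u : ℍ[ℝ] := (a : ℍ[ℝ]) - ω with hu
  have ha0 : 0 ≤ a := Finset.sum_nonneg fun j _ => sq_nonneg _
  have hnsu : normSq u = D := qc_normSq_sub a ω him
  have hD0 : 0 < D := by
    by_cases hω : ω = 0
    · have hq : q ≠ 0 := by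
        intro hq; exact hx (by simp [hq, hω])
      obtain ⟨i, hi⟩ := Function.ne_iff.1 hq
      have hai : 0 < a := by
        have : 0 < ‖q i‖ ^ 2 := pow_pos (norm_pos_iff.mpr hi) 2
        calc 0 < ‖q i‖ ^ 2 := this
        _ ≤ a := Finset.single_le_sum (f := fun j => ‖q j‖ ^ 2)
            (fun j _ => sq_nonneg _) (Finset.mem_univ i)
      have : 0 < a ^ 2 := by positivity
      nlinarith [sq_nonneg ‖ω‖]
    · have : 0 < ‖ω‖ ^ 2 := pow_pos (norm_pos_iff.mpr hω) 2
      nlinarith [sq_nonneg a]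
  have hu0 : u ≠ 0 := by
    intro h
    rw [h, map_zero] at hnsu
    exact absurd hnsu.symm (ne_of_gt hD0)
  have hDinv : D ≠ 0 := ne_of_gt hD0
  -- components of qcInv (q, ω)
  have h1 : (qcInv (q, ω)).1 = fun i => -(u⁻¹ * q i) := rfl
  have h2 : (qcInv (q, ω)).2 = -(D⁻¹ • ω) := rfl
  -- re of new second coordinate
  refine ⟨by simp [h2, him], ?_, ?_⟩
  · -- qcInv (q, ω) ≠ 0
    intro h
    by_cases hω : ω = 0
    · have hq : q ≠ 0 := fun hq => hx (by simp [hq, hω])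
      obtain ⟨i, hi⟩ := Function.ne_iff.1 hq
      have : (qcInv (q, ω)).1 i = 0 := by rw [h]; rfl
      rw [h1] at this
      simp only [neg_eq_zero, mul_eq_zero, inv_eq_zero] at this
      rcases this with h' | h'
      · exact hu0 h'
      · exact hi h'
    · have : (qcInv (q, ω)).2 = 0 := by rw [h]; rfl
      rw [h2, neg_eq_zero, smul_eq_zero] at this
      rcases this with h' | h'
      · exact hDinv (inv_eq_zero.1 h')
      · exact hω h'
  · -- involution
    -- new data
    have hnormu : ‖u‖ ^ 2 = D := by
      rw [← hnsu, Quaternion.normSq_eq_norm_mul_self, sq]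
    have ha' : (∑ j, ‖(qcInv (q, ω)).1 j‖ ^ 2 : ℝ) = D⁻¹ * a := by
      rw [h1]
      have : ∀ j, ‖-(u⁻¹ * q j)‖ ^ 2 = D⁻¹ * ‖q j‖ ^ 2 := by
        intro j
        rw [norm_neg, norm_mul, norm_inv, mul_pow, ← hnormu]
        simp [inv_pow]
      simp only [this, ← Finset.mul_sum, ha]
    have hω' : (qcInv (q, ω)).2 = -(D⁻¹ • ω) := h2
    have hnω' : ‖(qcInv (q, ω)).2‖ ^ 2 = D⁻¹ ^ 2 * ‖ω‖ ^ 2 := by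
      rw [hω', norm_neg, norm_smul, mul_pow]
      congr 1
      rw [Real.norm_eq_abs, sq_abs]
    have hD' : ((∑ j, ‖(qcInv (q, ω)).1 j‖ ^ 2) ^ 2 + ‖(qcInv (q, ω)).2‖ ^ 2 : ℝ)
        = D⁻¹ := by
      rw [ha', hnω', mul_pow]
      have h9 : D⁻¹ ^ 2 * a ^ 2 + D⁻¹ ^ 2 * ‖ω‖ ^ 2 = D⁻¹ ^ 2 * D := by rw [hD]; ring
      rw [h9, sq, mul_assoc, inv_mul_cancel₀ hDinv, mul_one]
    have hu' : (((∑ j, ‖(qcInv (q, ω)).1 j‖ ^ 2 : ℝ) : ℍ[ℝ]) - (qcInv (q, ω)).2) = u⁻¹ := by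
      rw [ha', hω', Quaternion.inv_def, hnsu, hu]
      have hsω : star ω = -ω := by ext <;> simp [him]
      rw [star_sub, star_coe, hsω, smul_sub, smul_neg, sub_neg_eq_add, sub_neg_eq_add,
        Quaternion.smul_coe]
    -- now compute qcInv (qcInv (q, ω))
    have hfst : (qcInv (qcInv (q, ω))).1 = q := by
      funext i
      show -((((∑ j, ‖(qcInv (q, ω)).1 j‖ ^ 2 : ℝ) : ℍ[ℝ]) - (qcInv (q, ω)).2)⁻¹ *
        (qcInv (q, ω)).1 i) = q i
      rw [hu', inv_inv, h1]
      simp only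
      rw [mul_neg, neg_neg, ← mul_assoc, mul_inv_cancel₀ hu0, one_mul]
    have hsnd : (qcInv (qcInv (q, ω))).2 = ω := by
      show -(((∑ j, ‖(qcInv (q, ω)).1 j‖ ^ 2) ^ 2 + ‖(qcInv (q, ω)).2‖ ^ 2 : ℝ)⁻¹ •
        (qcInv (q, ω)).2) = ω
      rw [hD', hω', inv_inv, smul_neg, neg_neg, smul_smul, mul_inv_cancel₀ hDinv, one_smul]
    exact Prod.ext hfst hsnd
end

section
/- The gauge norm N(q,ω) = (|q|⁴+|ω|²)^{1/4} on the quaternionic Heisenberg group satisfies N(σ(q,ω)) = 1/N(q,ω) for the inversion σ(q,ω) = (−(|q|²−ω)⁻¹·q, −ω/(|q|⁴+|ω|²)), for all (q,ω) ≠ (0,0). -/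
open Quaternion

/-- The gauge norm `N(q,ω) = (|q|⁴+|ω|²)^{1/4}`. -/
noncomputable def gaugeN {n : ℕ} (x : (Fin n → ℍ[ℝ]) × ℍ[ℝ]) : ℝ :=
  ((∑ i, ‖x.1 i‖ ^ 2) ^ 2 + ‖x.2‖ ^ 2) ^ ((1 : ℝ) / 4)

/-- `N(σ(q,ω)) = 1/N(q,ω)` for all `(q,ω) ≠ (0,0)`. -/
theorem gauge_norm_inversion (n : ℕ) (x : (Fin n → ℍ[ℝ]) × ℍ[ℝ])
    (him : x.2.re = 0) (hx : x ≠ 0) :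
    gaugeN (qcInv x) = 1 / gaugeN x := by
  set A := ∑ j, ‖x.1 j‖ ^ 2 with hA
  set D := A ^ 2 + ‖x.2‖ ^ 2 with hDdef
  have hDnn : 0 ≤ D := add_nonneg (sq_nonneg _) (sq_nonneg _)
  have hD : 0 < D := by
    rcases hDnn.lt_or_eq with h | h
    · exact h
    · exfalso; apply hx
      have h1 : A = 0 ∧ ‖x.2‖ = 0 := by
        constructor
        · nlinarith [sq_nonneg A, sq_nonneg ‖x.2‖]
        · nlinarith [sq_nonneg A, sq_nonneg ‖x.2‖]
      have h2 : ∀ i, x.1 i = 0 := by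
        intro i
        have h3 : ‖x.1 i‖ ^ 2 = 0 := by
          have := Finset.sum_eq_zero_iff_of_nonneg
            (fun j (_ : j ∈ Finset.univ) => sq_nonneg ‖x.1 j‖)
          exact (this.mp h1.1) i (Finset.mem_univ i)
        simpa using h3
      have h4 : x.2 = 0 := norm_eq_zero.mp h1.2
      ext i <;> simp [h2, h4]
  have hnorm : ‖(A : ℍ[ℝ]) - x.2‖ ^ 2 = D := by
    rw [sq, ← normSq_eq_norm_mul_self, hDdef, sq ‖x.2‖, ← normSq_eq_norm_mul_self,
      normSq_def', normSq_def']
    simp [him]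
    ring
  have hsum : (∑ i, ‖-((((A : ℝ) : ℍ[ℝ]) - x.2)⁻¹ * x.1 i)‖ ^ 2) = D⁻¹ * A := by
    have hc : ‖(((A : ℝ) : ℍ[ℝ]) - x.2)⁻¹‖ ^ 2 = D⁻¹ := by
      rw [norm_inv, inv_pow, hnorm]
    simp only [norm_neg, norm_mul, mul_pow, ← Finset.mul_sum, hc, ← hA]
  have h2 : ‖-(D⁻¹ • x.2)‖ ^ 2 = D⁻¹ ^ 2 * ‖x.2‖ ^ 2 := by
    rw [norm_neg, norm_smul, mul_pow]
    simp [abs_of_pos (inv_pos.mpr hD)]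
  have key : ((D⁻¹ * A) ^ 2 + D⁻¹ ^ 2 * ‖x.2‖ ^ 2) = D⁻¹ := by
    field_simp
    rw [hDdef]
  rw [gaugeN, qcInv]
  simp only [← hA]
  rw [hsum, h2, key, gaugeN, ← hA, ← hDdef, Real.inv_rpow hDnn]
  exact (one_div _).symm
end
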